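/- For every α ∈ (0,1)∪(1,∞), as β → 0⁺ the two-parameter Rényi conditional entropy converges to Cachin's Rényi conditional entropy: lim_{β→0⁺} H̃_{α,β}(X|Y) = Σ_{y: P_Y(y)>0} P_Y(y) · H_α(X)_{P_{X|y}}, where H_α(X)_{P_{X|y}} := (1/(1−α)) · log( Σ_x P_{X|Y}(x|y)^α ). -/

import Mathlib

open scoped BigOperators

noncomputable section

variable {𝓧 𝓨 : Type*} [Fintype 𝓧] [Fintype 𝓨]

/-- Marginal distribution of the second component. -/
def pY (P : 𝓧 × 𝓨 → ℝ) (y : 𝓨) : ℝ := ∑ x, P (x, y)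

/-- Conditional distribution `P_{X|Y}(x|y)`. -/
def pCond (P : 𝓧 × 𝓨 → ℝ) (x : 𝓧) (y : 𝓨) : ℝ := P (x, y) / pY P y

/-- Two-parameter Rényi conditional entropy `H̃_{α,β}(X|Y)`. -/
def Htilde (P : 𝓧 × 𝓨 → ℝ) (α β : ℝ) : ℝ :=
  α / (β * (1 - α)) *
    Real.logb 2 (∑ y, if 0 < pY P y then
      pY P y * (∑ x, pCond P x y ^ α) ^ (β / α) else 0)

/-- as `β → 0⁺`, `H̃_{α,β}(X|Y)` converges to Cachin's Rényi
conditional entropy `Σ_{y : P_Y(y) > 0} P_Y(y) · H_α(X)_{P_{X|y}}`. -/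
theorem Htilde_tendsto_cachin
    [Nonempty 𝓧] [Nonempty 𝓨]
    (P : 𝓧 × 𝓨 → ℝ) (hP : ∀ p, 0 ≤ P p) (hPsum : ∑ p, P p = 1)
    (α : ℝ) (hα : 0 < α) (hα1 : α ≠ 1) :
    Filter.Tendsto (fun β => Htilde P α β) (nhdsWithin 0 (Set.Ioi 0))
      (nhds (∑ y, if 0 < pY P y then
        pY P y * (1 / (1 - α) * Real.logb 2 (∑ x, pCond P x y ^ α)) else 0)) := by
  classical
  have hαne : α ≠ 0 := ne_of_gt hα
  have h1α : (1:ℝ) - α ≠ 0 := sub_ne_zero.mpr (Ne.symm hα1)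
  have hlog2 : Real.log 2 ≠ 0 := ne_of_gt (Real.log_pos one_lt_two)
  have hpY : ∀ y : 𝓨, 0 ≤ pY P y := fun y => Finset.sum_nonneg fun x _ => hP _
  set S : 𝓨 → ℝ := fun y => ∑ x, pCond P x y ^ α with hS
  have hSpos : ∀ y, 0 < pY P y → 0 < S y := by
    intro y hy
    apply Finset.sum_pos'
    · intro x _; exact Real.rpow_nonneg (div_nonneg (hP _) (hpY y)) α
    · obtain ⟨x, hx⟩ : ∃ x, 0 < P (x, y) := by
        by_contra h
        push_neg at h
        have h0 : pY P y = 0 :=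
          le_antisymm (Finset.sum_nonpos fun x _ => h x) (hpY y)
        exact absurd h0 (ne_of_gt hy)
      exact ⟨x, Finset.mem_univ x, Real.rpow_pos_of_pos (div_pos hx hy) α⟩
  set F : ℝ → ℝ := fun β => ∑ y, if 0 < pY P y then pY P y * (S y) ^ (β / α) else 0 with hF
  have hF0 : F 0 = 1 := by
    have h1 : F 0 = ∑ y, pY P y := by
      apply Finset.sum_congr rfl
      intro y _
      by_cases h : 0 < pY P y
      · simp [h]
      · simp only [if_neg h]
        exact (le_antisymm (not_lt.mp h) (hpY y)).symm
    rw [h1, ← hPsum, Fintype.sum_prod_type]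
    exact Finset.sum_comm
  set D : ℝ := ∑ y, if 0 < pY P y then pY P y * (Real.log (S y) / α) else 0 with hD
  have hFderiv : HasDerivAt F D 0 := by
    rw [hD, hF]
    apply HasDerivAt.fun_sum
    intro y _
    by_cases h : 0 < pY P y
    · simp only [if_pos h]
      have hr : HasDerivAt (fun β : ℝ => (S y) ^ (β / α)) (Real.log (S y) / α) 0 := by
        have h1 := (Real.hasStrictDerivAt_const_rpow (hSpos y h) ((0:ℝ) / α)).hasDerivAt
        have h2 := (hasDerivAt_id (0:ℝ)).div_const α
        have h3 := h1.comp 0 h2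
        simpa [Function.comp_def, div_eq_mul_inv, Real.rpow_zero, zero_div, mul_one_div] using h3
      exact hr.const_mul _
    · simp only [if_neg h]
      exact hasDerivAt_const 0 0
  set f : ℝ → ℝ := fun β => Real.logb 2 (F β) with hf
  have hf0 : f 0 = 0 := by rw [hf]; simp [hF0]
  have hfd : HasDerivAt f (D / Real.log 2) 0 := by
    have hlogd : HasDerivAt (fun β => Real.log (F β)) (D / F 0) 0 :=
      hFderiv.log (by rw [hF0]; norm_num)
    rw [hF0, div_one] at hlogd
    simpa [hf, Real.logb] using hlogd.div_const (Real.log 2)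
  have hsl := hasDerivAt_iff_tendsto_slope.mp hfd
  have hsl2 : Filter.Tendsto (slope f 0) (nhdsWithin 0 (Set.Ioi 0)) (nhds (D / Real.log 2)) :=
    hsl.mono_left (nhdsWithin_mono 0 (fun x hx => ne_of_gt hx))
  have hmain := hsl2.const_mul (α / (1 - α))
  have heq : ∀ β : ℝ, α / (1 - α) * slope f 0 β = Htilde P α β := by
    intro β
    rw [slope_def_field, hf0, sub_zero, sub_zero]
    simp only [Htilde, hf, hF, hS]
    rw [div_mul_div_comm, div_mul_eq_mul_div, mul_comm (1 - α) β]
  have hval : (∑ y, if 0 < pY P y then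
      pY P y * (1 / (1 - α) * Real.logb 2 (∑ x, pCond P x y ^ α)) else 0)
      = α / (1 - α) * (D / Real.log 2) := by
    rw [hD, Finset.sum_div, Finset.mul_sum]
    apply Finset.sum_congr rfl
    intro y _
    by_cases h : 0 < pY P y
    · simp only [if_pos h, Real.logb, hS]
      field_simp
    · simp [h]
  rw [hval]
  exact hmain.congr heq
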